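/- For every natural number k, the set of primitive abundant numbers n with Ω(n) = k is finite. -/

import Mathlib

/-- The sum of all divisors of `n`. -/
def sigma1 (n : ℕ) : ℕ := ∑ d ∈ n.divisors, d

/-- `n` is abundant if `σ(n) > 2n`. -/
def Abundant (n : ℕ) : Prop := 2 * n < sigma1 n

/-- `n` is deficient if `σ(n) < 2n`. -/
def Deficient (n : ℕ) : Prop := sigma1 n < 2 * n

/-- A primitive abundant number: abundant and all proper divisors deficient. -/
def PrimitiveAbundant (n : ℕ) : Prop :=
  Abundant n ∧ ∀ d ∈ n.properDivisors, Deficient d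

/-- `Ω(n)`: the number of prime factors of `n` counted with multiplicity. -/
def bigOmega (n : ℕ) : ℕ := n.primeFactorsList.length

/- ### Auxiliary lemmas -/

lemma aux_sum_image_le {α β : Type*} [DecidableEq β] (s : Finset α) (g : α → β) (f : β → ℕ) :
    ∑ b ∈ s.image g, f b ≤ ∑ a ∈ s, f (g a) := by
  classical
  induction s using Finset.induction with
  | empty => simp
  | @insert a s ha ih =>
    rw [Finset.image_insert, Finset.sum_insert ha]
    by_cases h : g a ∈ s.image g
    · rw [Finset.insert_eq_self.2 h]
      exact le_trans ih (Nat.le_add_left _ _)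
    · rw [Finset.sum_insert h]
      exact Nat.add_le_add_left ih _

lemma sigma1_mul_le (a b : ℕ) : sigma1 (a * b) ≤ sigma1 a * sigma1 b := by
  unfold sigma1
  rw [Nat.divisors_mul, Finset.sum_mul_sum, ← Finset.sum_product', ← Finset.image_mul_product]
  exact aux_sum_image_le _ _ _

lemma sigma1_prime {p : ℕ} (hp : p.Prime) : sigma1 p = p + 1 := by
  unfold sigma1
  rw [hp.divisors, Finset.sum_pair hp.one_lt.ne]
  omega

lemma sigma1_zero : sigma1 0 = 0 := by simp [sigma1]

lemma bigOmega_mul {a b : ℕ} (ha : a ≠ 0) (hb : b ≠ 0) :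
    bigOmega (a * b) = bigOmega a + bigOmega b := by
  unfold bigOmega
  rw [(Nat.perm_primeFactorsList_mul ha hb).length_eq, List.length_append]

lemma bigOmega_prime {p : ℕ} (hp : p.Prime) : bigOmega p = 1 := by
  unfold bigOmega
  rw [Nat.primeFactorsList_prime hp]
  rfl

/-- Bernoulli-type inequality in ℕ. -/
lemma aux_bernoulli (r t : ℕ) : (r + 1) ^ (t + 1) ≤ r ^ (t + 1) + (t + 1) * (r + 1) ^ t := by
  induction t with
  | zero => simp
  | succ t ih =>
    have h1 : (r + 1) ^ (t + 2) = (r + 1) ^ (t + 1) * (r + 1) := by ring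
    have h2 : r ^ (t + 1) ≤ (r + 1) ^ (t + 1) := Nat.pow_le_pow_left (by omega) _
    calc (r + 1) ^ (t + 2) = (r + 1) ^ (t + 1) * (r + 1) := by ring
      _ ≤ (r ^ (t + 1) + (t + 1) * (r + 1) ^ t) * (r + 1) := Nat.mul_le_mul_right _ ih
      _ = r ^ (t + 2) + r ^ (t + 1) + (t + 1) * (r + 1) ^ (t + 1) := by ring
      _ ≤ r ^ (t + 2) + (r + 1) ^ (t + 1) + (t + 1) * (r + 1) ^ (t + 1) := by omega
      _ = r ^ (t + 2) + (t + 2) * (r + 1) ^ (t + 1) := by ring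

/-- The auxiliary family of sets used in the induction. -/
def Dset (j t : ℕ) : Set ℕ :=
  {m | bigOmega m = j ∧ (∀ d, d ∣ m → Deficient d) ∧
    ∃ p, (∀ q ∈ m.primeFactors, q ≤ p) ∧
      2 * p ^ t * m < (p + 1) ^ t * sigma1 m}

lemma Dset_finite : ∀ j t : ℕ, (Dset j t).Finite := by
  intro j
  induction j with
  | zero =>
    intro t
    apply Set.Finite.subset (Set.finite_Iic 1)
    rintro m ⟨hΩ, -, -⟩
    have : m.primeFactorsList = [] := List.length_eq_zero_iff.mp hΩ
    have := (Nat.primeFactorsList_eq_nil m).mp this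
    simp only [Set.mem_Iic]; omega
  | succ j ih =>
    intro t
    obtain ⟨B, hB⟩ := (ih (t + 1)).bddAbove
    apply Set.Finite.subset (Set.finite_Iic (2 * (t + 1) * B * B))
    rintro m ⟨hΩ, hdef, p, hp, hcond⟩
    -- m ≠ 0
    have hm0 : m ≠ 0 := by
      rintro rfl
      rw [sigma1_zero] at hcond
      simp at hcond
    -- m ≠ 1
    have hm1 : m ≠ 1 := by
      rintro rfl
      simp [bigOmega] at hΩ
    have hm2 : 2 ≤ m := by omega
    -- largest prime factor r of m
    obtain ⟨r, hrmem, hrmax⟩ :=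
      Finset.exists_max_image m.primeFactors id (Nat.nonempty_primeFactors.mpr (by omega))
    simp only [id] at hrmax
    have hrp : r.Prime := Nat.prime_of_mem_primeFactors hrmem
    have hrdvd : r ∣ m := Nat.dvd_of_mem_primeFactors hrmem
    set u := m / r with hu
    have hmu : m = r * u := (Nat.mul_div_cancel' hrdvd).symm
    have hu0 : u ≠ 0 := by
      rintro h; rw [h, mul_zero] at hmu; exact hm0 hmu
    have hrlep : r ≤ p := hp r hrmem
    -- σ m ≤ (r+1) * σ u
    have hσm : sigma1 m ≤ (r + 1) * sigma1 u := by
      calc sigma1 m = sigma1 (r * u) := by rw [← hmu]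
        _ ≤ sigma1 r * sigma1 u := sigma1_mul_le r u
        _ = (r + 1) * sigma1 u := by rw [sigma1_prime hrp]
    -- u belongs to Dset j (t+1)
    have hucond : 2 * r ^ (t + 1) * u < (r + 1) ^ (t + 1) * sigma1 u := by
      have hY : 0 < (p + 1) ^ t := Nat.pow_pos (by omega)
      have hW : 0 < (r + 1) ^ t := Nat.pow_pos (by omega)
      have hXY : (r * (p + 1)) ^ t ≤ (p * (r + 1)) ^ t :=
        Nat.pow_le_pow_left (by nlinarith) t
      rw [mul_pow, mul_pow] at hXY
      have key : (p + 1) ^ t * (2 * r ^ (t + 1) * u) <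
          (p + 1) ^ t * ((r + 1) ^ (t + 1) * sigma1 u) := by
        calc (p + 1) ^ t * (2 * r ^ (t + 1) * u)
            = (r ^ t * (p + 1) ^ t) * (2 * r * u) := by ring
          _ ≤ (p ^ t * (r + 1) ^ t) * (2 * r * u) := Nat.mul_le_mul_right _ hXY
          _ = (r + 1) ^ t * (2 * p ^ t * (r * u)) := by ring
          _ = (r + 1) ^ t * (2 * p ^ t * m) := by rw [← hmu]
          _ < (r + 1) ^ t * ((p + 1) ^ t * sigma1 m) := Nat.mul_lt_mul_of_pos_left hcond hW
          _ ≤ (r + 1) ^ t * ((p + 1) ^ t * ((r + 1) * sigma1 u)) := by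
              exact Nat.mul_le_mul_left _ (Nat.mul_le_mul_left _ hσm)
          _ = (p + 1) ^ t * ((r + 1) ^ (t + 1) * sigma1 u) := by ring
      exact Nat.lt_of_mul_lt_mul_left key
    have huD : u ∈ Dset j (t + 1) := by
      refine ⟨?_, ?_, r, ?_, hucond⟩
      · have := bigOmega_mul (a := r) (b := u) hrp.pos.ne' hu0
        rw [← hmu, bigOmega_prime hrp] at this
        omega
      · intro d hd
        exact hdef d (hd.trans ⟨r, by rw [hmu]; ring⟩)
      · intro q hq
        have : q ∈ m.primeFactors := by
          rw [Nat.mem_primeFactors] at hq ⊢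
          exact ⟨hq.1, hq.2.1.trans ⟨r, by rw [hmu]; ring⟩, hm0⟩
        exact hrmax q this
    have huB : u ≤ B := hB huD
    -- bound r using deficiency of u and Bernoulli
    have hudef : Deficient u := hdef u ⟨r, by rw [hmu]; ring⟩
    have hσu : sigma1 u + 1 ≤ 2 * u := hudef
    have hrbound : r + 1 ≤ 2 * (t + 1) * u := by
      by_contra hcon
      push_neg at hcon
      have hbern := aux_bernoulli r t
      have h1 : (r + 1) ^ (t + 1) * (sigma1 u + 1) ≤ (r + 1) ^ (t + 1) * (2 * u) :=
        Nat.mul_le_mul_left _ hσu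
      have h2 : (r + 1) ^ (t + 1) * (2 * u) ≤
          (r ^ (t + 1) + (t + 1) * (r + 1) ^ t) * (2 * u) :=
        Nat.mul_le_mul_right _ hbern
      have h3 : (r ^ (t + 1) + (t + 1) * (r + 1) ^ t) * (2 * u)
          = 2 * r ^ (t + 1) * u + 2 * (t + 1) * (r + 1) ^ t * u := by ring
      have h4 : (r + 1) ^ (t + 1) * sigma1 u + (r + 1) ^ (t + 1)
          ≤ 2 * r ^ (t + 1) * u + 2 * (t + 1) * (r + 1) ^ t * u := by
        calc (r + 1) ^ (t + 1) * sigma1 u + (r + 1) ^ (t + 1)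
            = (r + 1) ^ (t + 1) * (sigma1 u + 1) := by ring
          _ ≤ (r + 1) ^ (t + 1) * (2 * u) := h1
          _ ≤ _ := by rw [← h3] at *; exact h2
      have h5 : (r + 1) ^ (t + 1) < 2 * (t + 1) * (r + 1) ^ t * u := by omega
      have h6 : (r + 1) ^ t * (r + 1) < (r + 1) ^ t * (2 * (t + 1) * u) := by
        calc (r + 1) ^ t * (r + 1) = (r + 1) ^ (t + 1) := by ring
          _ < 2 * (t + 1) * (r + 1) ^ t * u := h5
          _ = (r + 1) ^ t * (2 * (t + 1) * u) := by ring
      have := Nat.lt_of_mul_lt_mul_left h6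
      omega
    -- conclude m ≤ 2 (t+1) B²
    have : m ≤ 2 * (t + 1) * B * B := by
      calc m = r * u := hmu
        _ ≤ (2 * (t + 1) * u) * u := Nat.mul_le_mul_right _ (by omega)
        _ ≤ (2 * (t + 1) * B) * B := by
            have := Nat.mul_le_mul (Nat.mul_le_mul_left (2 * (t + 1)) huB) huB
            exact this
    exact this

/-- For every `k`, the set of primitive abundant numbers `n` with `Ω(n) = k` is finite. -/
theorem stmt13 (k : ℕ) :
    {n : ℕ | PrimitiveAbundant n ∧ bigOmega n = k}.Finite := by
  cases k with
  | zero =>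
    apply Set.Finite.subset (Set.finite_Iic 1)
    rintro n ⟨-, hΩ⟩
    have : n.primeFactorsList = [] := List.length_eq_zero_iff.mp hΩ
    have := (Nat.primeFactorsList_eq_nil n).mp this
    simp only [Set.mem_Iic]; omega
  | succ k =>
    obtain ⟨B, hB⟩ := (Dset_finite k 1).bddAbove
    apply Set.Finite.subset (Set.finite_Iic (2 * B * B))
    rintro n ⟨⟨habund, hdef⟩, hΩ⟩
    have hn0 : n ≠ 0 := by
      rintro rfl
      rw [Abundant, sigma1_zero] at habund
      omega
    have hn1 : n ≠ 1 := by
      rintro rfl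
      simp [bigOmega] at hΩ
    have hn2 : 2 ≤ n := by omega
    obtain ⟨p, hpmem, hpmax⟩ :=
      Finset.exists_max_image n.primeFactors id (Nat.nonempty_primeFactors.mpr (by omega))
    simp only [id] at hpmax
    have hpp : p.Prime := Nat.prime_of_mem_primeFactors hpmem
    have hpdvd : p ∣ n := Nat.dvd_of_mem_primeFactors hpmem
    set m := n / p with hm
    have hnm : n = p * m := (Nat.mul_div_cancel' hpdvd).symm
    have hm0 : m ≠ 0 := by rintro h; rw [h, mul_zero] at hnm; exact hn0 hnm
    have hmltn : m < n := by
      rw [hnm]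
      have := hpp.two_le
      nlinarith [Nat.pos_of_ne_zero hm0]
    have hσn : sigma1 n ≤ (p + 1) * sigma1 m := by
      calc sigma1 n = sigma1 (p * m) := by rw [← hnm]
        _ ≤ sigma1 p * sigma1 m := sigma1_mul_le p m
        _ = (p + 1) * sigma1 m := by rw [sigma1_prime hpp]
    have hcond : 2 * p ^ 1 * m < (p + 1) ^ 1 * sigma1 m := by
      simp only [pow_one]
      calc 2 * p * m = 2 * n := by rw [hnm]; ring
        _ < sigma1 n := habund
        _ ≤ (p + 1) * sigma1 m := hσn
    have hmD : m ∈ Dset k 1 := by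
      refine ⟨?_, ?_, p, ?_, hcond⟩
      · have := bigOmega_mul (a := p) (b := m) hpp.pos.ne' hm0
        rw [← hnm, bigOmega_prime hpp] at this
        omega
      · intro d hd
        apply hdef
        rw [Nat.mem_properDivisors]
        exact ⟨hd.trans ⟨p, by rw [hnm]; ring⟩, lt_of_le_of_lt (Nat.le_of_dvd (Nat.pos_of_ne_zero hm0) hd) hmltn⟩
      · intro q hq
        have : q ∈ n.primeFactors := by
          rw [Nat.mem_primeFactors] at hq ⊢
          exact ⟨hq.1, hq.2.1.trans ⟨p, by rw [hnm]; ring⟩, hn0⟩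
        exact hpmax q this
    have hmB : m ≤ B := hB hmD
    -- m is deficient
    have hmdef : Deficient m := hdef m (Nat.mem_properDivisors.mpr ⟨⟨p, by rw [hnm]; ring⟩, hmltn⟩)
    have hσm : sigma1 m + 1 ≤ 2 * m := hmdef
    -- p + 1 < 2m
    have hplt : p + 1 < 2 * m := by
      simp only [pow_one] at hcond
      nlinarith
    have : n ≤ 2 * B * B := by
      calc n = p * m := hnm
        _ ≤ (2 * m) * m := Nat.mul_le_mul_right _ (by omega)
        _ ≤ (2 * B) * B := Nat.mul_le_mul (Nat.mul_le_mul_left 2 hmB) hmB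
    exact this
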